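/- Let 1 → μ_m → G̃ →p G → 1 be a central extension of groups. Suppose every element x ∈ G admits a Jordan-type decomposition x = σu = uσ with σ in a specified class S of 'semisimple' elements, u in a specified class U of 'unipotent' elements, this decomposition being unique, and suppose there is a conjugation-invariant section s: U → G̃ of p. Then every x̃ ∈ G̃ admits a unique decomposition x̃ = σ̃·s(u) = s(u)·σ̃ with p(σ̃) ∈ S, u ∈ U. -/
import Mathlib


/-- Lifted Jordan decomposition: let `1 → μ_m → G̃ → G → 1` be a central
extension, `S` and `U` conjugation-invariant classes of "semisimple" and
"unipotent" elements of `G` such that every `x ∈ G` has a unique commuting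
decomposition `x = σu = uσ` with `σ ∈ S`, `u ∈ U`, and let `s : U → G̃` be a
conjugation-invariant section of `p` over `U`. Then every `x̃ ∈ G̃` admits a
unique decomposition `x̃ = σ̃·s(u) = s(u)·σ̃` with `p(σ̃) ∈ S` and `u ∈ U`. -/
theorem lifted_jordan_decomposition
    {Gt G : Type*} [Group Gt] [Group G] (m : ℕ)
    (p : Gt →* G) (hsurj : Function.Surjective p)
    (hcentral : ∀ z ∈ p.ker, z ∈ Subgroup.center Gt)
    (hexp : ∀ z ∈ p.ker, z ^ m = 1)
    (S U : Set G)
    (hSconj : ∀ g : G, ∀ σ ∈ S, g * σ * g⁻¹ ∈ S)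
    (hUconj : ∀ g : G, ∀ u ∈ U, g * u * g⁻¹ ∈ U)
    (hJordan : ∀ x : G, ∃! su : G × G, su.1 ∈ S ∧ su.2 ∈ U ∧
      x = su.1 * su.2 ∧ su.1 * su.2 = su.2 * su.1)
    (s : G → Gt)
    (hsec : ∀ u ∈ U, p (s u) = u)
    (hsconj : ∀ g : Gt, ∀ u ∈ U, g * s u * g⁻¹ = s (p g * u * (p g)⁻¹)) :
    ∀ xt : Gt, ∃! d : Gt × G, p d.1 ∈ S ∧ d.2 ∈ U ∧
      xt = d.1 * s d.2 ∧ d.1 * s d.2 = s d.2 * d.1 := by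
  intro xt
  obtain ⟨⟨σ, u⟩, ⟨hσ, hu, hx, hcomm⟩, huniq⟩ := hJordan (p xt)
  simp only at hσ hu hx hcomm
  -- x conjugates u to itself
  have hconjfix : p xt * u * (p xt)⁻¹ = u := by
    rw [mul_inv_eq_iff_eq_mul, hx, ← mul_assoc, hcomm, mul_assoc]
  have hcommute : xt * s u = s u * xt := by
    have := hsconj xt u hu
    rw [hconjfix] at this
    calc xt * s u = (xt * s u * xt⁻¹) * xt := by group
    _ = s u * xt := by rw [this]
  refine ⟨(xt * (s u)⁻¹, u), ⟨?_, hu, by group, ?_⟩, ?_⟩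
  · simp only
    have : p (xt * (s u)⁻¹) = σ := by
      rw [map_mul, map_inv, hsec u hu, hx]; group
    rw [this]; exact hσ
  · simp only
    calc xt * (s u)⁻¹ * s u = xt := by group
    _ = s u * (xt * (s u)⁻¹) := by rw [← mul_assoc, ← hcommute]; group
  · rintro ⟨σt', u'⟩ ⟨hσ', hu', hx', hcomm'⟩
    simp only at hσ' hu' hx' hcomm'
    have hpcomm : p σt' * u' = u' * p σt' := by
      have := congrArg p hcomm'
      simpa [hsec u' hu'] using this
    have := huniq (p σt', u') ⟨hσ', hu', by rw [hx', map_mul, hsec u' hu'], hpcomm⟩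
    have hu'' : u' = u := congrArg Prod.snd this
    subst hu''
    have : σt' = xt * (s u')⁻¹ := by rw [hx']; group
    simp [this]
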